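/- For every unimodal Kripke frame (X,R) and every m < ω: the formula R_m(◇) is valid in (X,R) if and only if (X,R) satisfies the reducible path property, i.e., for all x_0,...,x_{m+1} ∈ X with x_0 R x_1, x_1 R x_2, ..., x_m R x_{m+1}, either x_i = x_j for some i < j ≤ m+1, or x_i R x_{j+1} for some i < j ≤ m. -/

import Mathlib

set_option maxHeartbeats 1000000

/-- Modal formulas over an alphabet `A` of diamonds, with variables `pₙ`,
falsum and implication as primitive Boolean connectives. -/
inductive MF (A : Type) : Type
  | var : ℕ → MF A
  | bot : MF A
  | imp : MF A → MF A → MF A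
  | dia : A → MF A → MF A

namespace MF

variable {A : Type}

def neg (φ : MF A) : MF A := .imp φ .bot
def top : MF A := neg .bot
def or (φ ψ : MF A) : MF A := .imp (neg φ) ψ
def and (φ ψ : MF A) : MF A := neg (.imp φ (neg ψ))
def box (a : A) (φ : MF A) : MF A := neg (.dia a (neg φ))
def iff (φ ψ : MF A) : MF A := and (.imp φ ψ) (.imp ψ φ)

def bigOr : List (MF A) → MF A
  | [] => .bot
  | φ :: r => or φ (bigOr r)

def bigAnd : List (MF A) → MF A
  | [] => top
  | φ :: r => and φ (bigAnd r)

def subst (σ : ℕ → MF A) : MF A → MF A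
  | .var n => σ n
  | .bot => .bot
  | .imp φ ψ => .imp (subst σ φ) (subst σ ψ)
  | .dia a φ => .dia a (subst σ φ)

/-- `φ` is a `k`-formula: all its variables are among `p₀,…,p_{k-1}`. -/
def varsBelow (k : ℕ) : MF A → Prop
  | .var n => n < k
  | .bot => True
  | .imp φ ψ => varsBelow k φ ∧ varsBelow k ψ
  | .dia _ φ => varsBelow k φ

/-- Modal depth: maximal number of nested modalities. -/
def depth : MF A → ℕ
  | .var _ => 0
  | .bot => 0
  | .imp φ ψ => max (depth φ) (depth ψ)
  | .dia _ φ => depth φ + 1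

end MF

/-- Truth in a Kripke model `(X, R, θ)` at a point. -/
def satM {A X : Type} (R : A → X → X → Prop) (θ : ℕ → Set X) : X → MF A → Prop
  | w, MF.var n => w ∈ θ n
  | _, MF.bot => False
  | w, MF.imp φ ψ => satM R θ w φ → satM R θ w ψ
  | w, MF.dia a φ => ∃ v, R a w v ∧ satM R θ v φ

/-- Validity in a Kripke frame. -/
def validM {A X : Type} (R : A → X → X → Prop) (φ : MF A) : Prop :=
  ∀ θ w, satM R θ w φ

/-- `φ` is a substitution instance of a classical propositional tautology
(equivalently: true under every Boolean valuation treating variables and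
diamond formulas as atoms). -/
def IsTautInstance {A : Type} (φ : MF A) : Prop :=
  ∀ f : MF A → Prop, ¬ f .bot → (∀ ψ χ, f (.imp ψ χ) ↔ (f ψ → f χ)) → f φ

/-- `L` is a normal modal logic over `A`. -/
structure IsNormalLogic {A : Type} (L : Set (MF A)) : Prop where
  taut : ∀ φ : MF A, IsTautInstance φ → φ ∈ L
  dia_bot : ∀ a : A, (MF.dia a MF.bot).neg ∈ L
  dia_or : ∀ a : A,
    MF.imp (.dia a (MF.or (.var 0) (.var 1))) (MF.or (.dia a (.var 0)) (.dia a (.var 1))) ∈ L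
  mp : ∀ {φ ψ : MF A}, MF.imp φ ψ ∈ L → φ ∈ L → ψ ∈ L
  subst_mem : ∀ {φ : MF A} (σ : ℕ → MF A), φ ∈ L → φ.subst σ ∈ L
  mono : ∀ (a : A) {φ ψ : MF A}, MF.imp φ ψ ∈ L → MF.imp (.dia a φ) (.dia a ψ) ∈ L

/-- `L` is `k`-finite: there are finitely many `k`-formulas up to `L`-equivalence. -/
def kFinite {A : Type} (L : Set (MF A)) (k : ℕ) : Prop :=
  ∃ S : Finset (MF A), ∀ φ : MF A, φ.varsBelow k → ∃ ψ ∈ S, MF.iff φ ψ ∈ L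

def LocallyTabular {A : Type} (L : Set (MF A)) : Prop := ∀ k : ℕ, kFinite L k

/-- `◇_S φ`, the disjunction of `◇φ` over `◇ ∈ S`. -/
noncomputable def diaS {A : Type} (S : Finset A) (φ : MF A) : MF A :=
  MF.bigOr (S.toList.map (fun a => MF.dia a φ))

/-- `(◇_S)^n φ`. -/
noncomputable def diaSpow {A : Type} (S : Finset A) : ℕ → MF A → MF A
  | 0, φ => φ
  | n + 1, φ => diaS S (diaSpow S n φ)

/-- `◇_S^{≤ m} φ = ⋁_{i ≤ m} (◇_S)^i φ`. -/
noncomputable def diaSle {A : Type} (S : Finset A) (m : ℕ) (φ : MF A) : MF A :=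
  MF.bigOr ((List.range (m + 1)).map (fun i => diaSpow S i φ))

/-- `□* φ = ¬◇_S^{≤ m}¬φ`. -/
noncomputable def boxSle {A : Type} (S : Finset A) (m : ℕ) (φ : MF A) : MF A :=
  MF.neg (diaSle S m (MF.neg φ))

/-- The pretransitivity formula `atr_S(m) = (◇_S)^{m+1} p₀ → ◇_S^{≤m} p₀`. -/
noncomputable def atrS {A : Type} (S : Finset A) (m : ℕ) : MF A :=
  MF.imp (diaSpow S (m + 1) (.var 0)) (diaSle S m (.var 0))

/-- The finite-height formulas `B_h^{≤m}` over the compound modality `◇_S^{≤m}`: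
`B₀ = ⊥`, `B_h = p_h → □*(◇* p_h ∨ B_{h-1})`. -/
noncomputable def BstarS {A : Type} (S : Finset A) (m : ℕ) : ℕ → MF A
  | 0 => .bot
  | h + 1 => MF.imp (.var (h + 1))
      (boxSle S m (MF.or (diaSle S m (.var (h + 1))) (BstarS S m h)))

/-- Unimodal finite-height formulas: `B₀ = ⊥`, `B_h = p_h → □(◇ p_h ∨ B_{h-1})`. -/
def BformU : ℕ → MF Unit
  | 0 => .bot
  | h + 1 => MF.imp (.var (h + 1))
      (MF.box () (MF.or (MF.dia () (.var (h + 1))) (BformU h)))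

/-- `p_i ∧ ◇_S (p_{i+1} ∧ ◇_S ( … ∧ ◇_S p_{i+n}) … )`. -/
noncomputable def chainS {A : Type} (S : Finset A) : ℕ → ℕ → MF A
  | i, 0 => .var i
  | i, n + 1 => MF.and (.var i) (diaS S (chainS S (i + 1) n))

/-- The list of pairs `(i, j)` with `i < j ≤ n`. -/
def pairsLT (n : ℕ) : List (ℕ × ℕ) :=
  (List.range (n + 1)).flatMap (fun j => (List.range j).map (fun i => (i, j)))

/-- The reducible-path formula `R_m(◇_S)`. -/
noncomputable def RmS {A : Type} (S : Finset A) (m : ℕ) : MF A :=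
  MF.imp (chainS S 0 (m + 1))
    (MF.or
      (MF.bigOr ((pairsLT (m + 1)).map
        (fun p => diaSpow S p.1 (MF.and (.var p.1) (.var p.2)))))
      (MF.bigOr ((pairsLT m).map
        (fun p => diaSpow S p.1 (MF.and (.var p.1) (diaS S (.var (p.2 + 1))))))))

/-- `n`-fold relational composition: `R⁰ = Id`, `R^{n+1} = R ∘ Rⁿ`. -/
def relPow {X : Type} (R : X → X → Prop) : ℕ → X → X → Prop
  | 0 => fun a b => a = b
  | n + 1 => fun a c => ∃ b, R a b ∧ relPow R n b c

/-- Reflexive transitive closure `R* = ⋃ₙ Rⁿ`. -/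
def relStar {X : Type} (R : X → X → Prop) (a b : X) : Prop := ∃ n, relPow R n a b

/-- `R` is `m`-transitive: `R^{m+1} ⊆ R^{≤ m}`. -/
def mTransitive {X : Type} (R : X → X → Prop) (m : ℕ) : Prop :=
  ∀ a b, relPow R (m + 1) a b → ∃ i ≤ m, relPow R i a b

/-- The union `R_F = ⋃_{◇ ∈ A} R_◇`. -/
def unionRel {A X : Type} (R : A → X → X → Prop) : X → X → Prop :=
  fun a b => ∃ i, R i a b

/-- `R⁻¹[V] = {x ∣ ∃ y ∈ V, x R y}`. -/
def diaPre {X : Type} (R : X → X → Prop) (V : Set X) : Set X := {x | ∃ y ∈ V, R x y}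

/-- The height of `(X, R)` is at most `h`: there is no strictly ascending
(h+1)-chain with respect to `R*`. -/
def heightLE {X : Type} (R : X → X → Prop) (h : ℕ) : Prop :=
  ¬ ∃ x : ℕ → X, ∀ i < h, relStar R (x i) (x (i + 1)) ∧ ¬ relStar R (x (i + 1)) (x i)

/-- A partition is `R`-tuned. -/
def RTuned {X : Type} (R : X → X → Prop) (𝒰 : Set (Set X)) : Prop :=
  ∀ U ∈ 𝒰, ∀ V ∈ 𝒰, (∃ a ∈ U, ∃ b ∈ V, R a b) → ∀ a ∈ U, ∃ b ∈ V, R a b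

/-- A partition is tuned in the frame `(X, (R_◇)_{◇ ∈ A})`. -/
def TunedIn {A X : Type} (R : A → X → X → Prop) (𝒰 : Set (Set X)) : Prop :=
  ∀ a : A, RTuned (R a) 𝒰

/-- `𝒰` refines `𝒱`: every block of `𝒰` is included in a block of `𝒱`. -/
def Refines {X : Type} (𝒰 𝒱 : Set (Set X)) : Prop := ∀ U ∈ 𝒰, ∃ V ∈ 𝒱, U ⊆ V

/-- The equivalence `≡_𝒱` induced by a family of sets. -/
def famEq {X : Type} (𝒱 : Set (Set X)) (a b : X) : Prop := ∀ V ∈ 𝒱, (a ∈ V ↔ b ∈ V)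

/-- The set of equivalence classes of a relation. -/
def eqClasses {X : Type} (E : X → X → Prop) : Set (Set X) := {C | ∃ x, C = {y | E x y}}

/-- Tunedness condition for abstract normal operators `g_◇` on the powerset. -/
def gTuned {A X : Type} (g : A → Set X → Set X) (𝒰 : Set (Set X)) : Prop :=
  ∀ a : A, ∀ U ∈ 𝒰, ∀ V ∈ 𝒰, (V ∩ g a U).Nonempty → V ⊆ g a U

/-- `C` is a subalgebra of the modal algebra `(𝒫(X), ∪, ∩, ᶜ, (g_◇))`. -/
def IsSubalg {A X : Type} (g : A → Set X → Set X) (C : Set (Set X)) : Prop :=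
  ∅ ∈ C ∧ Set.univ ∈ C ∧ (∀ U ∈ C, ∀ V ∈ C, U ∪ V ∈ C) ∧
    (∀ U ∈ C, ∀ V ∈ C, U ∩ V ∈ C) ∧ (∀ U ∈ C, Uᶜ ∈ C) ∧ (∀ U ∈ C, ∀ a : A, g a U ∈ C)

/-- The subalgebra generated by `𝒬`. -/
def genAlg {A X : Type} (g : A → Set X → Set X) (𝒬 : Set (Set X)) : Set (Set X) :=
  ⋂₀ {C | IsSubalg g C ∧ 𝒬 ⊆ C}

/-- Points of a model indistinguishable by `k`-formulas of depth at most `d`. -/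
def modEq {A X : Type} (R : A → X → X → Prop) (θ : ℕ → Set X) (k d : ℕ) (a b : X) : Prop :=
  ∀ φ : MF A, φ.varsBelow k → φ.depth ≤ d → (satM R θ a φ ↔ satM R θ b φ)

/-- Points of a model indistinguishable by all `k`-formulas. -/
def modEqAll {A X : Type} (R : A → X → X → Prop) (θ : ℕ → Set X) (k : ℕ) (a b : X) : Prop :=
  ∀ φ : MF A, φ.varsBelow k → (satM R θ a φ ↔ satM R θ b φ)

/-- The modal depth of the `k`-model `(X, R, θ)` is at most `d`. -/
def mdModelLE {A X : Type} (R : A → X → X → Prop) (θ : ℕ → Set X) (k d : ℕ) : Prop :=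
  ∀ e : ℕ, modEq R θ k e ≠ modEq R θ k (e + 1) → e ≤ d

/-- Bundled Kripke frames over the alphabet `A`. -/
structure KFrame (A : Type) : Type 1 where
  W : Type
  R : A → W → W → Prop

/-- The logic of a class of Kripke frames. -/
def LogC {A : Type} (𝓕 : Set (KFrame A)) : Set (MF A) :=
  {φ | ∀ F ∈ 𝓕, validM F.R φ}

/-- `Y` is an upset of the frame: `R_◇[Y] ⊆ Y` for every `◇`. -/
def UpsetIn {A X : Type} (R : A → X → X → Prop) (Y : Set X) : Prop :=
  ∀ a : A, ∀ y ∈ Y, ∀ z, R a y z → z ∈ Y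

/-- The relations of a frame restricted to a subset. -/
def restrR {A X : Type} (R : A → X → X → Prop) (Y : Set X) : A → Y → Y → Prop :=
  fun a u v => R a u.val v.val

/-- A valuation restricted to a subset. -/
def restrV {X : Type} (θ : ℕ → Set X) (Y : Set X) : ℕ → Set Y :=
  fun n => {u | u.val ∈ θ n}

/-- The restriction `F ↾ Y` of a frame to a subset of its domain. -/
def KFrame.restrict {A : Type} (F : KFrame A) (Y : Set F.W) : KFrame A :=
  ⟨Y, restrR F.R Y⟩

/-- The induced partitions `𝒱_d`: `𝒱₀ = X/≡_𝒱` and `𝒱_{d+1}` is the quotient by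
the family `𝒱_d ∪ {R_◇⁻¹[V] : ◇ ∈ A, V ∈ 𝒱_d}`. -/
def stageClasses {A X : Type} (R : A → X → X → Prop) (𝒱 : Set (Set X)) : ℕ → Set (Set X)
  | 0 => eqClasses (famEq 𝒱)
  | d + 1 =>
      eqClasses (famEq (stageClasses R 𝒱 d ∪
        {V' | ∃ a : A, ∃ V ∈ stageClasses R 𝒱 d, V' = diaPre (R a) V}))

/-- `𝒱_ω = ⋃_d 𝒱_d`. -/
def stageUnion {A X : Type} (R : A → X → X → Prop) (𝒱 : Set (Set X)) : Set (Set X) :=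
  ⋃ d : ℕ, stageClasses R 𝒱 d

/-- `md(V) = min {d ∣ V ∈ 𝒱_d}` (as an extended natural). -/
noncomputable def mdBlock {A X : Type} (R : A → X → X → Prop) (𝒱 : Set (Set X))
    (V : Set X) : ℕ∞ :=
  ⨅ d ∈ {d : ℕ | V ∈ stageClasses R 𝒱 d}, (d : ℕ∞)

/-- `md(𝒱) = sup {md(V) ∣ V ∈ 𝒱_ω}`. -/
noncomputable def mdFam {A X : Type} (R : A → X → X → Prop) (𝒱 : Set (Set X)) : ℕ∞ :=
  ⨆ V ∈ stageUnion R 𝒱, mdBlock R 𝒱 V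

/-- The modal depth of a frame: `sup` of `md(𝒱)` over finite families `𝒱`. -/
noncomputable def mdFrame {A : Type} (F : KFrame A) : ℕ∞ :=
  ⨆ 𝒱 ∈ {𝒱 : Set (Set F.W) | 𝒱.Finite}, mdFam F.R 𝒱

/-- The modal depth of a class of frames. -/
noncomputable def mdClass {A : Type} (𝓕 : Set (KFrame A)) : ℕ∞ :=
  ⨆ F ∈ 𝓕, mdFrame F

/-- `md(L) = sup_φ min {md(ψ) ∣ φ ↔ ψ ∈ L}`. -/
noncomputable def mdLogic {A : Type} (L : Set (MF A)) : ℕ∞ :=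
  ⨆ φ : MF A, ⨅ ψ ∈ {ψ : MF A | MF.iff φ ψ ∈ L}, (ψ.depth : ℕ∞)

/-- `tra(𝓕)`: the least `m` such that every frame in `𝓕` is `m`-transitive. -/
noncomputable def traClass {A : Type} (𝓕 : Set (KFrame A)) : ℕ∞ :=
  ⨅ m ∈ {m : ℕ | ∀ F ∈ 𝓕, mTransitive (unionRel F.R) m}, (m : ℕ∞)

/-- The disjoint sum of a family of frames. -/
def disjSum {A I : Type} (F : I → KFrame A) : KFrame A where
  W := Σ i : I, (F i).W
  R a x y := ∃ (i : I) (u v : (F i).W), x = ⟨i, u⟩ ∧ y = ⟨i, v⟩ ∧ (F i).R a u v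

/-- The cluster of a point: its equivalence class under `a R* b ∧ b R* a`. -/
def clusterOf {X : Type} (R : X → X → Prop) (x : X) : Set X :=
  {y | relStar R x y ∧ relStar R y x}

/-- `clust(𝓕)`: the restrictions of frames in `𝓕` to their clusters. -/
def clustC {A : Type} (𝓕 : Set (KFrame A)) : Set (KFrame A) :=
  {G | ∃ F ∈ 𝓕, ∃ x : F.W, G = F.restrict (clusterOf (unionRel F.R) x)}

/-- Unimodal diamond. -/
def dia1 (φ : MF Unit) : MF Unit := .dia () φ

/-- `◇^i φ` (unimodal). -/
def dia1pow : ℕ → MF Unit → MF Unit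
  | 0, φ => φ
  | n + 1, φ => dia1 (dia1pow n φ)

/-- `p_i ∧ ◇(p_{i+1} ∧ ◇( … ∧ ◇ p_{i+n}) … )` (unimodal). -/
def chain1 : ℕ → ℕ → MF Unit
  | i, 0 => .var i
  | i, n + 1 => MF.and (.var i) (dia1 (chain1 (i + 1) n))

/-- The unimodal reducible-path formula `R_m(◇)`. -/
def RmU (m : ℕ) : MF Unit :=
  MF.imp (chain1 0 (m + 1))
    (MF.or
      (MF.bigOr ((pairsLT (m + 1)).map
        (fun p => dia1pow p.1 (MF.and (.var p.1) (.var p.2)))))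
      (MF.bigOr ((pairsLT m).map
        (fun p => dia1pow p.1 (MF.and (.var p.1) (dia1 (.var (p.2 + 1))))))))

section Stmt5Aux

variable {X : Type} {R : X → X → Prop} {θ : ℕ → Set X}

lemma sat_and' {w : X} {φ ψ : MF Unit} :
    satM (fun _ : Unit => R) θ w (MF.and φ ψ) ↔
      satM (fun _ : Unit => R) θ w φ ∧ satM (fun _ : Unit => R) θ w ψ := by
  simp only [MF.and, MF.neg, satM]; tauto

lemma sat_or' {w : X} {φ ψ : MF Unit} :
    satM (fun _ : Unit => R) θ w (MF.or φ ψ) ↔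
      satM (fun _ : Unit => R) θ w φ ∨ satM (fun _ : Unit => R) θ w ψ := by
  simp only [MF.or, MF.neg, satM]; tauto

lemma sat_bigOr' {w : X} : ∀ l : List (MF Unit),
    satM (fun _ : Unit => R) θ w (MF.bigOr l) ↔
      ∃ φ ∈ l, satM (fun _ : Unit => R) θ w φ
  | [] => by simp [MF.bigOr, satM]
  | φ :: r => by
    simp only [MF.bigOr, sat_or', sat_bigOr' r, List.mem_cons]
    constructor
    · rintro (h | ⟨ψ, hψ, h⟩)
      · exact ⟨φ, Or.inl rfl, h⟩
      · exact ⟨ψ, Or.inr hψ, h⟩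
    · rintro ⟨ψ, (rfl | hψ), h⟩
      · exact Or.inl h
      · exact Or.inr ⟨ψ, hψ, h⟩

lemma sat_dia1pow' {φ : MF Unit} : ∀ (i : ℕ) (w : X),
    satM (fun _ : Unit => R) θ w (dia1pow i φ) ↔
      ∃ v, relPow R i w v ∧ satM (fun _ : Unit => R) θ v φ
  | 0, w => by
    simp only [dia1pow, relPow]
    exact ⟨fun h => ⟨w, rfl, h⟩, fun ⟨v, hv, h⟩ => hv ▸ h⟩
  | n + 1, w => by
    simp only [dia1pow, dia1, satM, relPow]
    constructor
    · rintro ⟨v, hv, h⟩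
      obtain ⟨u, hu, h⟩ := (sat_dia1pow' n v).1 h
      exact ⟨u, ⟨v, hv, hu⟩, h⟩
    · rintro ⟨u, ⟨v, hv, hu⟩, h⟩
      exact ⟨v, hv, (sat_dia1pow' n v).2 ⟨u, hu, h⟩⟩

lemma mem_pairsLT' {n i j : ℕ} : (i, j) ∈ pairsLT n ↔ i < j ∧ j ≤ n := by
  simp only [pairsLT, List.mem_flatMap, List.mem_range, List.mem_map, Prod.mk.injEq]
  constructor
  · rintro ⟨k, hk, l, hl, rfl, rfl⟩; omega
  · rintro ⟨h1, h2⟩; exact ⟨j, by omega, i, h1, rfl, rfl⟩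

lemma chain_intro' (x : ℕ → X) : ∀ (n i : ℕ),
    (∀ k, i ≤ k → k < i + n → R (x k) (x (k + 1))) →
    (∀ k, i ≤ k → k ≤ i + n → x k ∈ θ k) →
    satM (fun _ : Unit => R) θ (x i) (chain1 i n)
  | 0, i, _, hv => by
    simpa [chain1, satM] using hv i le_rfl (by omega)
  | n + 1, i, hr, hv => by
    rw [chain1, sat_and']
    refine ⟨hv i le_rfl (by omega), ⟨x (i + 1), hr i le_rfl (by omega), ?_⟩⟩
    exact chain_intro' x n (i + 1) (fun k h1 h2 => hr k (by omega) (by omega))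
      (fun k h1 h2 => hv k (by omega) (by omega))

lemma chain_elim' : ∀ (n i : ℕ) (w : X),
    satM (fun _ : Unit => R) θ w (chain1 i n) →
    ∃ y : ℕ → X, y i = w ∧ (∀ k, i ≤ k → k < i + n → R (y k) (y (k + 1))) ∧
      (∀ k, i ≤ k → k ≤ i + n → y k ∈ θ k)
  | 0, i, w, h => by
    refine ⟨fun _ => w, rfl, fun k h1 h2 => absurd h2 (by omega), fun k h1 h2 => ?_⟩
    have : k = i := by omega
    subst this
    simpa [chain1, satM] using h
  | n + 1, i, w, h => by
    rw [chain1, sat_and'] at h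
    obtain ⟨hw, v, hRv, hv⟩ := h
    obtain ⟨y, hyi, hr, hm⟩ := chain_elim' n (i + 1) v hv
    refine ⟨fun t => if t = i then w else y t, by simp, fun k h1 h2 => ?_, fun k h1 h2 => ?_⟩
    · rcases eq_or_lt_of_le h1 with rfl | h1'
      · simpa [hyi] using hRv
      · have hki : ¬ (k = i) := by omega
        have : ¬ (k + 1 = i) := by omega
        simp only [hki, this, if_false]
        exact hr k (by omega) (by omega)
    · rcases eq_or_lt_of_le h1 with rfl | h1'
      · simpa [satM] using hw
      · have hki : ¬ (k = i) := by omega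
        simp only [hki, if_false]
        exact hm k (by omega) (by omega)

lemma path_relPow' (y : ℕ → X) : ∀ (n s : ℕ),
    (∀ k, s ≤ k → k < s + n → R (y k) (y (k + 1))) →
    relPow R n (y s) (y (s + n))
  | 0, s, _ => rfl
  | n + 1, s, hr => by
    refine ⟨y (s + 1), hr s le_rfl (by omega), ?_⟩
    have := path_relPow' y n (s + 1) (fun k h1 h2 => hr k (by omega) (by omega))
    have heq : s + 1 + n = s + (n + 1) := by omega
    rwa [heq] at this

end Stmt5Aux

/-- `R_m(◇)` is valid in a unimodal Kripke frame `(X, R)` iff the frame has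
the reducible path property. -/
theorem stmt5 {X : Type} (R : X → X → Prop) (m : ℕ) :
    validM (fun _ : Unit => R) (RmU m) ↔
      ∀ x : ℕ → X, (∀ i ≤ m, R (x i) (x (i + 1))) →
        (∃ i j, i < j ∧ j ≤ m + 1 ∧ x i = x j) ∨
        (∃ i j, i < j ∧ j ≤ m ∧ R (x i) (x (j + 1))) := by
  constructor
  · -- validity → reducible path property
    intro hval x hx
    set θ : ℕ → Set X := fun n => {z | z = x n} with hθ
    have hchain : satM (fun _ : Unit => R) θ (x 0) (chain1 0 (m + 1)) := by
      apply chain_intro'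
      · intro k _ h2; exact hx k (by omega)
      · intro k _ _; rfl
    have h := hval θ (x 0)
    rw [RmU] at h
    have h := h hchain
    rw [sat_or'] at h
    rcases h with h | h
    · left
      rw [sat_bigOr'] at h
      obtain ⟨φ, hφ, hsat⟩ := h
      rw [List.mem_map] at hφ
      obtain ⟨⟨i, j⟩, hp, rfl⟩ := hφ
      rw [mem_pairsLT'] at hp
      rw [sat_dia1pow'] at hsat
      obtain ⟨v, _, hv⟩ := hsat
      rw [sat_and'] at hv
      simp only [satM, hθ, Set.mem_setOf_eq] at hv
      exact ⟨i, j, hp.1, hp.2, hv.1 ▸ hv.2⟩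
    · right
      rw [sat_bigOr'] at h
      obtain ⟨φ, hφ, hsat⟩ := h
      rw [List.mem_map] at hφ
      obtain ⟨⟨i, j⟩, hp, rfl⟩ := hφ
      rw [mem_pairsLT'] at hp
      rw [sat_dia1pow'] at hsat
      obtain ⟨v, _, hv⟩ := hsat
      rw [sat_and'] at hv
      obtain ⟨hv1, u, hRu, hu⟩ := hv
      simp only [satM, hθ, Set.mem_setOf_eq] at hv1 hu
      exact ⟨i, j, hp.1, hp.2, by rw [← hv1, ← hu]; exact hRu⟩
  · -- reducible path property → validity
    intro H θ w
    rw [RmU]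
    intro hchain
    obtain ⟨y, hy0, hr, hm⟩ := chain_elim' (m + 1) 0 w hchain
    simp only [Nat.zero_le, zero_add, true_implies] at hr hm
    rcases H y (fun i hi => hr i (by omega)) with ⟨i, j, hij, hj, hxy⟩ | ⟨i, j, hij, hj, hxy⟩
    · rw [sat_or']
      left
      rw [sat_bigOr']
      refine ⟨dia1pow i (MF.and (.var i) (.var j)), ?_, ?_⟩
      · exact List.mem_map.2 ⟨(i, j), mem_pairsLT'.2 ⟨hij, hj⟩, rfl⟩
      · rw [sat_dia1pow']
        refine ⟨y i, ?_, ?_⟩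
        · have := path_relPow' y i 0 (fun k _ hk => hr k (by omega))
          simpa [hy0] using this
        · rw [sat_and']
          constructor
          · exact hm i (by omega)
          · show y i ∈ θ j
            rw [hxy]; exact hm j (by omega)
    · rw [sat_or']
      right
      rw [sat_bigOr']
      refine ⟨dia1pow i (MF.and (.var i) (dia1 (.var (j + 1)))), ?_, ?_⟩
      · exact List.mem_map.2 ⟨(i, j), mem_pairsLT'.2 ⟨hij, hj⟩, rfl⟩
      · rw [sat_dia1pow']
        refine ⟨y i, ?_, ?_⟩
        · have := path_relPow' y i 0 (fun k _ hk => hr k (by omega))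
          simpa [hy0] using this
        · rw [sat_and']
          refine ⟨hm i (by omega), y (j + 1), hxy, hm (j + 1) (by omega)⟩
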